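/- For almost surely terminating loops, the weakest pre-expectation and the weakest liberal pre-expectation coincide on post-expectations bounded by one: if ∑' τ, W σ τ = 1 for every σ (the loop is AST) and the post-expectation E : Σ → ℝ≥0∞ satisfies E ≤ 1 pointwise, then lfp Φ_E = wlpe E, where (wlpe E) σ := (∑' τ, W σ τ * E τ) + (1 - ∑' τ, W σ τ). Consequently every expectation I ≤ 1 with I = Φ_E I equals lfp Φ_E. -/

import Mathlib

open ENNReal

/-- The characteristic function of the loop `while G do body` with respect to
post-expectation `E`. -/
noncomputable def Phi {S : Type*} (G : S → Prop) [DecidablePred G] (body : S → PMF S)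
    (E : S → ℝ≥0∞) (X : S → ℝ≥0∞) : S → ℝ≥0∞ :=
  fun σ => if G σ then ∑' τ, body σ τ * X τ else E σ

theorem Phi_monotone {S : Type*} (G : S → Prop) [DecidablePred G] (body : S → PMF S)
    (E : S → ℝ≥0∞) : Monotone (Phi G body E) := by
  intro X Y hXY σ
  simp only [Phi]
  split
  · exact ENNReal.tsum_le_tsum fun τ => by gcongr <;> exact hXY τ
  · exact le_rfl

/-- The characteristic function, bundled as a monotone map on the complete
lattice of expectations. -/
noncomputable def PhiHom {S : Type*} (G : S → Prop) [DecidablePred G] (body : S → PMF S)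
    (E : S → ℝ≥0∞) : (S → ℝ≥0∞) →o (S → ℝ≥0∞) :=
  ⟨Phi G body E, Phi_monotone G body E⟩

/-- The stopped `n`-step kernels of the loop `while G do body`. -/
noncomputable def mu {S : Type*} (G : S → Prop) [DecidablePred G] [DecidableEq S]
    (body : S → PMF S) : ℕ → S → S → ℝ≥0∞
  | 0 => fun σ τ => if ¬ G σ ∧ τ = σ then 1 else 0
  | n + 1 => fun σ =>
      if G σ then (fun τ => ∑' σ', body σ σ' * mu G body n σ' τ) else mu G body 0 σ

/-- The loop's output sub-distribution. -/
noncomputable def W {S : Type*} (G : S → Prop) [DecidablePred G] [DecidableEq S]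
    (body : S → PMF S) (σ τ : S) : ℝ≥0∞ :=
  ⨆ n, mu G body n σ τ

/-- The weakest liberal pre-expectation of the loop. -/
noncomputable def wlpe {S : Type*} (G : S → Prop) [DecidablePred G] [DecidableEq S]
    (body : S → PMF S) (E : S → ℝ≥0∞) : S → ℝ≥0∞ :=
  fun σ => (∑' τ, W G body σ τ * E τ) + (1 - ∑' τ, W G body σ τ)


section Aux

open scoped ENNReal

private lemma tsum_iSup_mono {ι : Type*} (f : ℕ → ι → ℝ≥0∞)
    (hf : ∀ i, Monotone fun n => f n i) :
    ∑' i, ⨆ n, f n i = ⨆ n, ∑' i, f n i := by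
  simp_rw [ENNReal.tsum_eq_iSup_sum]
  rw [show (⨆ s : Finset ι, ∑ i ∈ s, ⨆ n, f n i)
      = ⨆ s : Finset ι, ⨆ n, ∑ i ∈ s, f n i from
    iSup_congr fun s => ENNReal.finsetSum_iSup_of_monotone fun i => hf i]
  exact iSup_comm

private lemma swap_tsum {S : Type*} (a : S → ℝ≥0∞) (b : S → S → ℝ≥0∞) (c : S → ℝ≥0∞) :
    ∑' τ, (∑' σ', a σ' * b σ' τ) * c τ = ∑' σ', a σ' * ∑' τ, b σ' τ * c τ := by
  calc ∑' τ, (∑' σ', a σ' * b σ' τ) * c τ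
      = ∑' τ, ∑' σ', a σ' * b σ' τ * c τ := by simp_rw [ENNReal.tsum_mul_right]
    _ = ∑' σ', ∑' τ, a σ' * b σ' τ * c τ := ENNReal.tsum_comm
    _ = ∑' σ', a σ' * ∑' τ, b σ' τ * c τ := by simp_rw [mul_assoc, ENNReal.tsum_mul_left]

variable {S : Type*} (G : S → Prop) [DecidablePred G] [DecidableEq S] (body : S → PMF S)

private lemma mu_zero_apply (σ τ : S) :
    mu G body 0 σ τ = if ¬ G σ ∧ τ = σ then 1 else 0 := by rw [mu]

private lemma mu_succ_pos {σ : S} (h : G σ) (n : ℕ) (τ : S) :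
    mu G body (n + 1) σ τ = ∑' σ', body σ σ' * mu G body n σ' τ := by
  conv_lhs => rw [mu]
  simp only [if_pos h]

private lemma mu_succ_neg {σ : S} (h : ¬ G σ) (n : ℕ) (τ : S) :
    mu G body (n + 1) σ τ = mu G body 0 σ τ := by
  conv_lhs => rw [mu]
  simp only [if_neg h]

private lemma mu_mono_succ (n : ℕ) : mu G body n ≤ mu G body (n + 1) := by
  induction n with
  | zero =>
    intro σ τ
    by_cases h : G σ
    · rw [mu_zero_apply]
      simp [h]
    · rw [mu_succ_neg G body h]
  | succ n ih =>
    intro σ τ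
    by_cases h : G σ
    · rw [mu_succ_pos G body h, mu_succ_pos G body h]
      exact ENNReal.tsum_le_tsum fun σ' => mul_le_mul_right (ih σ' τ) _
    · rw [mu_succ_neg G body h, mu_succ_neg G body h]

private lemma mu_mono (σ τ : S) : Monotone fun n => mu G body n σ τ :=
  monotone_nat_of_le_succ fun n => mu_mono_succ G body n σ τ

private lemma W_of_not_guard {σ : S} (h : ¬ G σ) (τ : S) :
    W G body σ τ = if τ = σ then 1 else 0 := by
  have key : ∀ n, mu G body n σ τ = if τ = σ then 1 else 0 := by
    intro n
    cases n with
    | zero => rw [mu_zero_apply]; simp [h]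
    | succ n => rw [mu_succ_neg G body h, mu_zero_apply]; simp [h]
  simp [W, key]

private lemma W_of_guard {σ : S} (h : G σ) (τ : S) :
    W G body σ τ = ∑' σ', body σ σ' * W G body σ' τ := by
  have h1 : W G body σ τ = ⨆ n, mu G body (n + 1) σ τ :=
    ((mu_mono G body σ τ).iSup_nat_add 1).symm
  rw [h1]
  simp_rw [mu_succ_pos G body h]
  rw [← tsum_iSup_mono (fun n σ' => body σ σ' * mu G body n σ' τ)
    (fun σ' m k hmk => mul_le_mul_right (mu_mono G body σ' τ hmk) _)]
  exact tsum_congr fun σ' => by rw [W, ENNReal.mul_iSup]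

/-- wpe as weighted sum. -/
private noncomputable def V (E : S → ℝ≥0∞) : S → ℝ≥0∞ :=
  fun σ => ∑' τ, W G body σ τ * E τ

private lemma tsum_mu_zero (E : S → ℝ≥0∞) {σ : S} (h : ¬ G σ) :
    (∑' τ, mu G body 0 σ τ * E τ) = E σ := by
  rw [tsum_eq_single σ (fun τ hτ => by rw [mu_zero_apply]; simp [hτ])]
  rw [mu_zero_apply]
  simp [h]

private lemma muE_le_lfp (E : S → ℝ≥0∞) (n : ℕ) (σ : S) :
    (∑' τ, mu G body n σ τ * E τ) ≤ OrderHom.lfp (PhiHom G body E) σ := by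
  set L := OrderHom.lfp (PhiHom G body E) with hLdef
  have hL : Phi G body E L = L := OrderHom.map_lfp (PhiHom G body E)
  induction n generalizing σ with
  | zero =>
    by_cases h : G σ
    · have : ∀ τ, mu G body 0 σ τ * E τ = 0 := fun τ => by
        rw [mu_zero_apply]; simp [h]
      simp [this]
    · rw [tsum_mu_zero G body E h]
      conv_rhs => rw [← hL]
      simp [Phi, h]
  | succ n ih =>
    by_cases h : G σ
    · simp_rw [mu_succ_pos G body h]
      rw [swap_tsum]
      calc (∑' σ', body σ σ' * ∑' τ, mu G body n σ' τ * E τ)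
          ≤ ∑' σ', body σ σ' * L σ' :=
            ENNReal.tsum_le_tsum fun σ' => mul_le_mul_right (ih σ') _
        _ = L σ := by conv_rhs => rw [← hL]; simp [Phi, h]
    · simp_rw [mu_succ_neg G body h]
      rw [tsum_mu_zero G body E h]
      conv_rhs => rw [← hL]
      simp [Phi, h]

private lemma V_fixed (E : S → ℝ≥0∞) : Phi G body E (V G body E) = V G body E := by
  funext σ
  by_cases h : G σ
  · simp only [Phi, if_pos h, V]
    rw [← swap_tsum]
    exact tsum_congr fun τ => by rw [← W_of_guard G body h τ]
  · simp only [Phi, if_neg h, V]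
    rw [tsum_eq_single σ (fun τ hτ => by simp [W_of_not_guard G body h, hτ])]
    simp [W_of_not_guard G body h]

private lemma lfp_eq_V (E : S → ℝ≥0∞) :
    OrderHom.lfp (PhiHom G body E) = V G body E := by
  apply le_antisymm
  · exact OrderHom.lfp_le (PhiHom G body E) (le_of_eq (V_fixed G body E))
  · intro σ
    have hV : V G body E σ = ⨆ n, ∑' τ, mu G body n σ τ * E τ := by
      rw [V]
      simp_rw [W, ENNReal.iSup_mul]
      exact tsum_iSup_mono (fun n τ => mu G body n σ τ * E τ)
        fun τ m k hmk => mul_le_mul_left (mu_mono G body σ τ hmk) _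
    rw [hV]
    exact iSup_le fun n => muE_le_lfp G body E n σ

end Aux

/-- for almost surely terminating loops, wpe and wlpe coincide on
post-expectations bounded by one; consequently every bounded exact invariant
equals the least fixed point. -/
theorem lfp_eq_wlpe_of_AST {S : Type*} [Countable S] [DecidableEq S]
    (G : S → Prop) [DecidablePred G] (body : S → PMF S)
    (hAST : ∀ σ : S, ∑' τ, W G body σ τ = 1)
    (E : S → ℝ≥0∞) (hE : ∀ σ, E σ ≤ 1) :
    OrderHom.lfp (PhiHom G body E) = wlpe G body E ∧
    ∀ I : S → ℝ≥0∞, (∀ σ, I σ ≤ 1) → I = Phi G body E I →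
      I = OrderHom.lfp (PhiHom G body E) := by
  have hW1 : ∀ σ, V G body E σ = OrderHom.lfp (PhiHom G body E) σ := fun σ =>
    (congrFun (lfp_eq_V G body E) σ).symm
  set E' : S → ℝ≥0∞ := fun τ => 1 - E τ with hE'
  have hsum : ∀ σ, V G body E σ + V G body E' σ = 1 := by
    intro σ
    rw [V, V, ← ENNReal.tsum_add]
    calc (∑' τ, (W G body σ τ * E τ + W G body σ τ * E' τ))
        = ∑' τ, W G body σ τ := by
          refine tsum_congr fun τ => ?_
          rw [← mul_add, hE', add_tsub_cancel_of_le (hE τ), mul_one]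
      _ = 1 := hAST σ
  have hV'le : ∀ σ, V G body E' σ ≤ 1 := fun σ =>
    le_trans le_add_self (le_of_eq (hsum σ))
  have hVeq : ∀ σ, V G body E σ = 1 - V G body E' σ := fun σ =>
    ENNReal.eq_sub_of_add_eq (ne_top_of_le_ne_top one_ne_top (hV'le σ)) (hsum σ)
  constructor
  · funext σ
    rw [wlpe, hAST σ, tsub_self, add_zero, ← hW1 σ, V]
  · intro I hI hfix
    have hle : OrderHom.lfp (PhiHom G body E) ≤ I :=
      OrderHom.lfp_le (PhiHom G body E) (le_of_eq hfix.symm)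
    refine le_antisymm (fun σ => ?_) hle
    -- 1 - I is a fixed point of Phi with post-expectation E'
    have hfix' : Phi G body E' (fun τ => 1 - I τ) = fun τ => 1 - I τ := by
      funext σ
      by_cases h : G σ
      · simp only [Phi, if_pos h]
        have hIσ : I σ = ∑' σ', body σ σ' * I σ' := by
          conv_lhs => rw [hfix]
          simp [Phi, h]
        have hmul : (∑' σ', body σ σ' * (1 - I σ')) + ∑' σ', body σ σ' * I σ' = 1 := by
          rw [← ENNReal.tsum_add]
          calc (∑' σ', (body σ σ' * (1 - I σ') + body σ σ' * I σ'))
              = ∑' σ', body σ σ' := by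
                refine tsum_congr fun σ' => ?_
                rw [← mul_add, tsub_add_cancel_of_le (hI σ'), mul_one]
            _ = 1 := (body σ).tsum_coe
        have hfin : (∑' σ', body σ σ' * I σ') ≠ ∞ := by
          refine ne_top_of_le_ne_top one_ne_top ?_
          calc (∑' σ', body σ σ' * I σ') ≤ ∑' σ', body σ σ' * 1 :=
                ENNReal.tsum_le_tsum fun σ' => mul_le_mul_right (hI σ') _
            _ = 1 := by simp [(body σ).tsum_coe]
        rw [ENNReal.eq_sub_of_add_eq hfin hmul, ← hIσ]
      · simp only [Phi, if_neg h, hE']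
        have : I σ = E σ := by conv_lhs => rw [hfix]; simp [Phi, h]
        rw [this]
    have hV'le' : V G body E' σ ≤ 1 - I σ := by
      have h1 : OrderHom.lfp (PhiHom G body E') ≤ fun τ => 1 - I τ :=
        OrderHom.lfp_le (PhiHom G body E') (le_of_eq hfix')
      have h2 := congrFun (lfp_eq_V G body E') σ
      exact h2 ▸ h1 σ
    have hadd : I σ + V G body E' σ ≤ 1 :=
      calc I σ + V G body E' σ ≤ I σ + (1 - I σ) := add_le_add_right hV'le' _
        _ = 1 := add_tsub_cancel_of_le (hI σ)
    calc I σ ≤ 1 - V G body E' σ :=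
          ENNReal.le_sub_of_add_le_right (ne_top_of_le_ne_top one_ne_top (hV'le σ)) hadd
      _ = V G body E σ := (hVeq σ).symm
      _ = OrderHom.lfp (PhiHom G body E) σ := hW1 σ
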